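/- The only solution of x^y = y^x in integers with 1 < x < y is (x,y) = (2,4). -/

import Mathlib

lemma aux_two_pow (m : ℕ) (hm : 2 ≤ m) : m + 2 ≤ 2 ^ m := by
  induction m with
  | zero => omega
  | succ n ih =>
    rcases Nat.lt_or_ge n 2 with hn | hn
    · interval_cases n <;> simp_all
    · have := ih hn
      have : 2 ^ (n + 1) = 2 * 2 ^ n := by ring
      omega

theorem stmt_2 (x y : ℕ) (h1 : 1 < x) (h2 : x < y) (h : x ^ y = y ^ x) :
    x = 2 ∧ y = 4 := by
  have hx0 : x ≠ 0 := by omega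
  -- x ∣ y
  have hdvd : x ∣ y := by
    have h1' : x ^ x ∣ x ^ y := pow_dvd_pow x (le_of_lt h2)
    rw [h] at h1'
    exact (Nat.pow_dvd_pow_iff hx0).mp h1'
  obtain ⟨k, hk⟩ := hdvd
  have hk2 : 2 ≤ k := by
    rcases Nat.lt_or_ge k 2 with hkl | hkl
    · interval_cases k <;> omega
    · exact hkl
  -- derive x^(k-1) = k
  have key : x ^ (k - 1) = k := by
    have heq : x ^ (x * k) = x ^ x * k ^ x := by
      rw [← hk, h, hk, mul_pow]
    have heq2 : x ^ x * x ^ (x * (k - 1)) = x ^ x * k ^ x := by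
      rw [← pow_add]
      have : x + x * (k - 1) = x * k := by
        cases k with
        | zero => omega
        | succ n => simp [Nat.succ_sub_one]; ring
      rw [this]; exact heq
    have heq3 : x ^ (x * (k - 1)) = k ^ x :=
      Nat.eq_of_mul_eq_mul_left (Nat.pow_pos (by omega)) heq2
    have heq4 : (x ^ (k - 1)) ^ x = k ^ x := by
      rw [← pow_mul, Nat.mul_comm]; exact heq3
    exact Nat.pow_left_injective (by omega) heq4
  -- x = 2
  have hxle : x = 2 := by
    by_contra hx2
    have hx3 : 3 ≤ x := by omega
    have h1 : k ≤ 2 ^ (k - 1) := by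
      have := Nat.lt_two_pow_self (n := k - 1)
      omega
    have h2' : 2 ^ (k - 1) < x ^ (k - 1) :=
      Nat.pow_lt_pow_left (by omega) (by omega)
    omega
  subst hxle
  have hk4 : k = 2 := by
    by_contra hk3
    have hk3' : 3 ≤ k := by omega
    have := aux_two_pow (k - 1) (by omega)
    omega
  subst hk4
  omega
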